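/- Let φ : ℝ^{n−1} → ℝ be differentiable with Lipschitz gradient, φ(0) = 0, ∇φ(0) = 0, let Ω = {(x,t) ∈ ℝⁿ : t > φ(x)}, and let F, G, F̃ be the maps of the reflection construction. Suppose δ > 0 is small enough that F̃ is a bijection from 𝓑_δ = B_δ^{n−1}(0) × (−δ, δ) onto its image U with Lipschitz inverse, that F̃(𝓑_δ ∩ {s > 0}) ⊆ Ω and F̃(𝓑_δ ∩ {s < 0}) ⊆ Ωᶜ. Let u be a function on the closure of Ω ∩ U, set v(x,s) = u(F(x,s)) for s > 0, define ṽ(x,s) = v(x,s) for s ≥ 0 and ṽ(x,s) = v(x,−s) for s < 0, and define the reflection ũ(X) = ṽ(F̃⁻¹(X)) for X ∈ U. Then the map Φ : F̃(𝓑_δ ∩ {s < 0}) → closure(Ω), Φ(X) = F(R(F̃⁻¹(X))) where R(x,s) = (x,−s), is Lipschitz (being a composition of Lipschitz maps), extends continuously by the identity to the boundary points F̃(𝓑_δ ∩ {s = 0}) ⊆ ∂Ω, and satisfies ũ(X) = u(Φ(X)) for all X ∈ F̃(𝓑_δ ∩ {s < 0}). -/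

import Mathlib

open MeasureTheory Metric Set Filter
open scoped ENNReal NNReal Topology ContDiff

noncomputable section

abbrev Euc (n : ℕ) := EuclideanSpace ℝ (Fin n)

/-- The standard bump function `η(x) = C e^{1/(|x|²-1)}` for `|x| < 1`, `0` otherwise. -/
def bump (d : ℕ) (C : ℝ) (x : Euc d) : ℝ :=
  if ‖x‖ < 1 then C * Real.exp (1 / (‖x‖ ^ 2 - 1)) else 0

/-- The rescaled mollifier `η_s(x) = s^{-d} η(x/s)`. -/
def bumpS (d : ℕ) (C : ℝ) (s : ℝ) (x : Euc d) : ℝ :=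
  (s ^ d)⁻¹ * bump d C (s⁻¹ • x)

/-- The downward-graph unit normal `ν(x) = (∇φ(x), −1)/√(1 + |∇φ(x)|²)`. -/
def normalVec {d : ℕ} (φ : Euc d → ℝ) (x : Euc d) : Euc d × ℝ :=
  (Real.sqrt (1 + ‖gradient φ x‖ ^ 2))⁻¹ • (gradient φ x, (-1 : ℝ))

/-- The componentwise convolution `(η_s * ν)(x) = ∫ η_s(y) ν(x−y) dy`. -/
def convNormal {d : ℕ} (C : ℝ) (φ : Euc d → ℝ) (s : ℝ) (x : Euc d) : Euc d × ℝ :=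
  ∫ y : Euc d, bumpS d C s y • normalVec φ (x - y)

/-- `F(x,s) = (x, φ(x)) − s (η_s * ν)(x)`. -/
def Fmap {d : ℕ} (C : ℝ) (φ : Euc d → ℝ) (p : Euc d × ℝ) : Euc d × ℝ :=
  ((p.1, φ p.1) : Euc d × ℝ) - p.2 • convNormal C φ p.2 p.1

/-- `G(x,s) = (x, φ(x)) + s (η_s * ν)(x)`. -/
def Gmap {d : ℕ} (C : ℝ) (φ : Euc d → ℝ) (p : Euc d × ℝ) : Euc d × ℝ :=
  ((p.1, φ p.1) : Euc d × ℝ) + p.2 • convNormal C φ p.2 p.1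

/-- The two-sided extension `F̃(x,s)`: `F(x,s)` for `s ≥ 0` (with `F̃(x,0) = (x,φ(x))`)
and `G(x,−s)` for `s < 0`. -/
def Ftil {d : ℕ} (C : ℝ) (φ : Euc d → ℝ) (p : Euc d × ℝ) : Euc d × ℝ :=
  if 0 ≤ p.2 then Fmap C φ p else Gmap C φ (p.1, -p.2)

/-- The standard reflection `R(x,s) = (x,−s)`. -/
def Rrefl {d : ℕ} (p : Euc d × ℝ) : Euc d × ℝ := (p.1, -p.2)

/-- The parameter box `𝓑_δ = B_δ^{d}(0) × (−δ, δ)`. -/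
def paramBox (d : ℕ) (δ : ℝ) : Set (Euc d × ℝ) :=
  (ball (0 : Euc d) δ) ×ˢ Ioo (-δ) δ

/-- The region `Ω = {(x,t) : t > φ(x)}` above the graph of `φ`. -/
def aboveGraph {d : ℕ} (φ : Euc d → ℝ) : Set (Euc d × ℝ) :=
  {q | φ q.1 < q.2}

/-- The even reflection `ṽ(x,s)` of `v(x,s) = u(F(x,s))` across `{s = 0}`. -/
def vTil {d : ℕ} (C : ℝ) (φ : Euc d → ℝ) (u : Euc d × ℝ → ℝ) (p : Euc d × ℝ) : ℝ :=
  if 0 ≤ p.2 then u (Fmap C φ p) else u (Fmap C φ (p.1, -p.2))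

/-- The reflection `ũ(X) = ṽ(F̃⁻¹(X))` of `u` across the graph of `φ`. -/
def uTil {d : ℕ} (C : ℝ) (φ : Euc d → ℝ) (δ : ℝ) (u : Euc d × ℝ → ℝ)
    (X : Euc d × ℝ) : ℝ :=
  vTil C φ u (Function.invFunOn (Ftil C φ) (paramBox d δ) X)

/-- The reflection map `Φ(X) = F(R(F̃⁻¹(X)))`. -/
def PhiMap {d : ℕ} (C : ℝ) (φ : Euc d → ℝ) (δ : ℝ) (X : Euc d × ℝ) : Euc d × ℝ :=
  Fmap C φ (Rrefl (Function.invFunOn (Ftil C φ) (paramBox d δ) X))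

section AuxLemmas

variable {d : ℕ}

lemma one_le_sqrt_one_add_sq (t : ℝ) : 1 ≤ Real.sqrt (1 + t ^ 2) := by
  have := Real.sqrt_le_sqrt (show (1:ℝ) ≤ 1 + t ^ 2 by nlinarith [sq_nonneg t])
  rwa [Real.sqrt_one] at this

lemma norm_le_sqrt_one_add_sq (t : ℝ) (ht : 0 ≤ t) : t ≤ Real.sqrt (1 + t ^ 2) := by
  have := Real.sqrt_le_sqrt (show t ^ 2 ≤ 1 + t ^ 2 by nlinarith)
  rwa [Real.sqrt_sq ht] at this

lemma sqrtOneAddSq_lip (a b : ℝ) :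
    |Real.sqrt (1 + a ^ 2) - Real.sqrt (1 + b ^ 2)| ≤ |a - b| := by
  have key : ∀ a b : ℝ, Real.sqrt (1 + a ^ 2) - Real.sqrt (1 + b ^ 2) ≤ |a - b| := by
    intro a b
    have hb0 : (0:ℝ) ≤ 1 + b ^ 2 := by positivity
    have hs : Real.sqrt (1 + b ^ 2) ^ 2 = 1 + b ^ 2 := Real.sq_sqrt hb0
    have hsb : |b| ≤ Real.sqrt (1 + b ^ 2) := by
      rw [← Real.sqrt_sq_eq_abs]
      exact Real.sqrt_le_sqrt (by nlinarith)
    have h2 : b ≤ |b| := le_abs_self b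
    have h3 : -b ≤ |b| := neg_le_abs b
    have h4 : a - b ≤ |a - b| := le_abs_self _
    have h5 : b - a ≤ |a - b| := by rw [abs_sub_comm]; exact le_abs_self _
    have h6 : (0:ℝ) ≤ |a - b| := abs_nonneg _
    have hpv : 0 ≤ (Real.sqrt (1 + b ^ 2) - b) * (|a - b| - (b - a)) :=
      mul_nonneg (by linarith) (by linarith)
    have hqu : 0 ≤ (Real.sqrt (1 + b ^ 2) + b) * (|a - b| - (a - b)) :=
      mul_nonneg (by linarith) (by linarith)
    have huv : 0 ≤ (|a - b| - (a - b)) * (|a - b| - (b - a)) :=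
      mul_nonneg (by linarith) (by linarith)
    have h1 : Real.sqrt (1 + a ^ 2) ≤ Real.sqrt (1 + b ^ 2) + |a - b| := by
      have hle : (1 + a ^ 2) ≤ (Real.sqrt (1 + b ^ 2) + |a - b|) ^ 2 := by nlinarith
      calc Real.sqrt (1 + a ^ 2)
          ≤ Real.sqrt ((Real.sqrt (1 + b ^ 2) + |a - b|) ^ 2) := Real.sqrt_le_sqrt hle
        _ = Real.sqrt (1 + b ^ 2) + |a - b| := by
            rw [Real.sqrt_sq (by positivity)]
    linarith
  refine abs_sub_le_iff.mpr ⟨key a b, ?_⟩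
  rw [abs_sub_comm]; exact key b a

lemma normVec_aux_le (g : Euc d) :
    ‖((g, (-1:ℝ)) : Euc d × ℝ)‖ ≤ Real.sqrt (1 + ‖g‖ ^ 2) := by
  rw [Prod.norm_def]
  have h1 : (1:ℝ) ≤ Real.sqrt (1 + ‖g‖ ^ 2) := one_le_sqrt_one_add_sq _
  have h2 : ‖g‖ ≤ Real.sqrt (1 + ‖g‖ ^ 2) := norm_le_sqrt_one_add_sq _ (norm_nonneg g)
  simp only [norm_neg, norm_one]
  exact max_le h2 h1

lemma norm_normalVec_le (φ : Euc d → ℝ) (x : Euc d) : ‖normalVec φ x‖ ≤ 1 := by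
  unfold normalVec
  set g := gradient φ x
  have h1 : (1:ℝ) ≤ Real.sqrt (1 + ‖g‖ ^ 2) := one_le_sqrt_one_add_sq _
  have h0 : (0:ℝ) < Real.sqrt (1 + ‖g‖ ^ 2) := by linarith
  rw [norm_smul, Real.norm_eq_abs, abs_of_nonneg (inv_nonneg.2 h0.le)]
  rw [inv_mul_le_iff₀ h0, mul_one]
  exact normVec_aux_le g

lemma normalVec_sub_le (φ : Euc d → ℝ) (x y : Euc d) :
    ‖normalVec φ x - normalVec φ y‖ ≤ 2 * ‖gradient φ x - gradient φ y‖ := by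
  unfold normalVec
  set g := gradient φ x
  set g' := gradient φ y
  set s := Real.sqrt (1 + ‖g‖ ^ 2) with hs_def
  set s' := Real.sqrt (1 + ‖g'‖ ^ 2) with hs'_def
  have hs1 : (1:ℝ) ≤ s := one_le_sqrt_one_add_sq _
  have hs1' : (1:ℝ) ≤ s' := one_le_sqrt_one_add_sq _
  have hs0 : (0:ℝ) < s := by linarith
  have hs0' : (0:ℝ) < s' := by linarith
  set A : Euc d × ℝ := (g, (-1:ℝ))
  set B : Euc d × ℝ := (g', (-1:ℝ))
  have hkey : s⁻¹ • A - s'⁻¹ • B = s⁻¹ • (A - B) + (s⁻¹ - s'⁻¹) • B := by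
    rw [smul_sub, sub_smul]; abel
  have hAB : ‖A - B‖ = ‖g - g'‖ := by
    have : A - B = ((g - g', (0:ℝ)) : Euc d × ℝ) := by
      simp [A, B, Prod.ext_iff]
    rw [this, Prod.norm_def]
    simp [norm_nonneg]
  have hterm1 : ‖s⁻¹ • (A - B)‖ ≤ ‖g - g'‖ := by
    rw [norm_smul, Real.norm_eq_abs, abs_of_nonneg (inv_nonneg.2 hs0.le), hAB]
    have : s⁻¹ ≤ 1 := by
      rw [inv_le_one_iff₀]; right; linarith
    nlinarith [norm_nonneg (g - g')]
  have hterm2 : ‖(s⁻¹ - s'⁻¹) • B‖ ≤ ‖g - g'‖ := by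
    rw [norm_smul, Real.norm_eq_abs]
    have hdiff : s⁻¹ - s'⁻¹ = (s' - s) / (s * s') := by
      field_simp
    rw [hdiff, abs_div, abs_of_pos (mul_pos hs0 hs0')]
    rw [div_mul_eq_mul_div, div_le_iff₀ (mul_pos hs0 hs0')]
    have h1 : |s' - s| ≤ ‖g - g'‖ := by
      rw [abs_sub_comm, hs_def, hs'_def]
      exact le_trans (sqrtOneAddSq_lip ‖g‖ ‖g'‖) (abs_norm_sub_norm_le g g')
    have h2 : ‖B‖ ≤ s * s' := by
      have := normVec_aux_le (d := d) g'
      calc ‖B‖ ≤ s' := this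
        _ = 1 * s' := (one_mul s').symm
        _ ≤ s * s' := by nlinarith
    exact mul_le_mul h1 h2 (norm_nonneg _) (norm_nonneg _)
  calc ‖s⁻¹ • A - s'⁻¹ • B‖ = ‖s⁻¹ • (A - B) + (s⁻¹ - s'⁻¹) • B‖ := by rw [hkey]
    _ ≤ ‖s⁻¹ • (A - B)‖ + ‖(s⁻¹ - s'⁻¹) • B‖ := norm_add_le _ _
    _ ≤ ‖g - g'‖ + ‖g - g'‖ := add_le_add hterm1 hterm2
    _ = 2 * ‖g - g'‖ := by ring

lemma normalVec_lip {φ : Euc d → ℝ} {Kgrad : ℝ≥0}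
    (hLip : LipschitzWith Kgrad (gradient φ)) (x y : Euc d) :
    ‖normalVec φ x - normalVec φ y‖ ≤ 2 * Kgrad * ‖x - y‖ := by
  calc ‖normalVec φ x - normalVec φ y‖ ≤ 2 * ‖gradient φ x - gradient φ y‖ :=
        normalVec_sub_le φ x y
    _ ≤ 2 * (Kgrad * ‖x - y‖) := by
        have := hLip.dist_le_mul x y
        rw [dist_eq_norm, dist_eq_norm] at this
        linarith
    _ = 2 * Kgrad * ‖x - y‖ := by ring

lemma bump_nonneg {C : ℝ} (hC : 0 ≤ C) (x : Euc d) : 0 ≤ bump d C x := by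
  unfold bump; split
  · positivity
  · exact le_refl 0

lemma bump_le {C : ℝ} (hC : 0 ≤ C) (x : Euc d) : bump d C x ≤ C := by
  unfold bump; split
  · rename_i h
    have h1 : ‖x‖ ^ 2 - 1 < 0 := by nlinarith [norm_nonneg x]
    have h2 : 1 / (‖x‖ ^ 2 - 1) ≤ 0 := by
      apply div_nonpos_of_nonneg_of_nonpos <;> linarith
    have : Real.exp (1 / (‖x‖ ^ 2 - 1)) ≤ 1 := Real.exp_le_one_iff.2 h2
    nlinarith [Real.exp_pos (1 / (‖x‖ ^ 2 - 1))]
  · exact hC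

lemma bump_eq_zero {C : ℝ} {x : Euc d} (h : ¬ ‖x‖ < 1) : bump d C x = 0 := by
  unfold bump; rw [if_neg h]

lemma bump_measurable (C : ℝ) : Measurable (bump d C) := by
  have h1 : Measurable fun x : Euc d => C * Real.exp (1 / (‖x‖ ^ 2 - 1)) := by
    apply Measurable.const_mul
    apply Real.measurable_exp.comp
    simp only [one_div]; exact (show Measurable fun x : Euc d => ‖x‖ ^ 2 - 1 from ((measurable_norm : Measurable (fun x : Euc d => ‖x‖)).pow_const 2).sub (measurable_const : Measurable fun _ : Euc d => (1:ℝ))).inv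
  exact Measurable.ite (measurableSet_lt measurable_norm measurable_const) h1 measurable_const

lemma bump_integrable {C : ℝ} (hC : 0 ≤ C) : MeasureTheory.Integrable (bump d C) := by
  apply MeasureTheory.Integrable.mono'
    (g := (Metric.closedBall (0:Euc d) 1).indicator fun _ => C)
  · rw [MeasureTheory.integrable_indicator_iff measurableSet_closedBall]
    exact MeasureTheory.integrableOn_const measure_closedBall_lt_top.ne enorm_ne_top
  · exact (bump_measurable C).aestronglyMeasurable
  · filter_upwards with x
    rw [Real.norm_eq_abs, abs_of_nonneg (bump_nonneg hC x)]
    by_cases h : ‖x‖ < 1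
    · rw [Set.indicator_of_mem (by simpa [Metric.mem_closedBall, dist_zero_right] using h.le)]
      exact bump_le hC x
    · rw [bump_eq_zero h]
      exact Set.indicator_nonneg (fun _ _ => hC) x

/-- The substituted convolution integrand. -/
def gAux {d : ℕ} (C : ℝ) (φ : Euc d → ℝ) (x : Euc d) (s : ℝ) : Euc d × ℝ :=
  ∫ z : Euc d, bump d C z • normalVec φ (x - s • z)

lemma integrable_core {C : ℝ} (hC : 0 ≤ C) {φ : Euc d → ℝ} {Kgrad : ℝ≥0}
    (hLip : LipschitzWith Kgrad (gradient φ)) (x : Euc d) (s : ℝ) :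
    MeasureTheory.Integrable (fun z : Euc d => bump d C z • normalVec φ (x - s • z)) := by
  have hν : Continuous (normalVec φ) := by
    apply LipschitzWith.continuous (K := 2 * Kgrad)
    apply LipschitzWith.of_dist_le_mul
    intro a b
    rw [dist_eq_norm, dist_eq_norm]
    calc ‖normalVec φ a - normalVec φ b‖ ≤ 2 * Kgrad * ‖a - b‖ := normalVec_lip hLip a b
      _ = (2 * Kgrad : ℝ≥0) * ‖a - b‖ := by push_cast; ring
  apply MeasureTheory.Integrable.mono' (bump_integrable hC)
  · exact ((bump_measurable C).aestronglyMeasurable).smul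
      (hν.comp (continuous_const.sub (continuous_id.const_smul s))).aestronglyMeasurable
  · filter_upwards with z
    rw [norm_smul, Real.norm_eq_abs, abs_of_nonneg (bump_nonneg hC z)]
    calc bump d C z * ‖normalVec φ (x - s • z)‖ ≤ bump d C z * 1 :=
        mul_le_mul_of_nonneg_left (norm_normalVec_le φ _) (bump_nonneg hC z)
      _ = bump d C z := mul_one _

lemma convNormal_eq {C : ℝ} (φ : Euc d → ℝ) (x : Euc d) {s : ℝ} (hs : 0 < s) :
    convNormal C φ s x = gAux C φ x s := by
  set f : Euc d → Euc d × ℝ := fun z => bump d C z • normalVec φ (x - s • z) with hf_def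
  have hf : ∀ y : Euc d, bumpS d C s y • normalVec φ (x - y) = (s ^ d)⁻¹ • f (s⁻¹ • y) := by
    intro y
    simp only [hf_def, bumpS, smul_inv_smul₀ hs.ne', mul_smul]
  unfold convNormal gAux
  rw [show (∫ y : Euc d, bumpS d C s y • normalVec φ (x - y)) =
      ∫ y : Euc d, (s ^ d)⁻¹ • f (s⁻¹ • y) from by simp_rw [hf]]
  rw [MeasureTheory.integral_smul]
  rw [MeasureTheory.Measure.integral_comp_inv_smul_of_nonneg MeasureTheory.volume f hs.le]
  rw [finrank_euclideanSpace_fin, smul_smul, inv_mul_cancel₀ (pow_ne_zero d hs.ne'), one_smul]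

lemma Fmap_eq {C : ℝ} (φ : Euc d → ℝ) (x : Euc d) {s : ℝ} (hs : 0 ≤ s) :
    Fmap C φ (x, s) = ((x, φ x) : Euc d × ℝ) - s • gAux C φ x s := by
  rcases eq_or_lt_of_le hs with h | h
  · simp [Fmap, ← h]
  · unfold Fmap
    simp only
    rw [convNormal_eq φ x h]

lemma psi_est {d : ℕ} {C : ℝ} (hC : 0 ≤ C) {φ : Euc d → ℝ} {Kgrad : ℝ≥0}
    (hLip : LipschitzWith Kgrad (gradient φ))
    (hnorm : ∫ x : Euc d, bump d C x = 1)
    {δ : ℝ} (hδ : 0 ≤ δ) (x y : Euc d) {s t : ℝ}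
    (hs : s ∈ Set.Icc 0 δ) (ht : t ∈ Set.Icc 0 δ) :
    ‖s • gAux C φ x s - t • gAux C φ y t‖ ≤
      (1 + 2 * δ * (2 * Kgrad)) * max ‖x - y‖ |s - t| := by
  set F1 : Euc d → Euc d × ℝ := fun z => s • (bump d C z • normalVec φ (x - s • z)) with hF1
  set F2 : Euc d → Euc d × ℝ := fun z => t • (bump d C z • normalVec φ (y - t • z)) with hF2
  have hi1 : MeasureTheory.Integrable F1 := by
    have := (integrable_core hC hLip x s).smul (c := s)
    simpa [Pi.smul_def] using this
  have hi2 : MeasureTheory.Integrable F2 := by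
    have := (integrable_core hC hLip y t).smul (c := t)
    simpa [Pi.smul_def] using this
  have h1 : s • gAux C φ x s = ∫ z, F1 z := by
    unfold gAux; rw [← MeasureTheory.integral_smul]
  have h2 : t • gAux C φ y t = ∫ z, F2 z := by
    unfold gAux; rw [← MeasureTheory.integral_smul]
  set M : ℝ := |s - t| + δ * (2 * Kgrad * (‖x - y‖ + |s - t|)) with hM_def
  have hMnonneg : 0 ≤ M := by
    have : (0:ℝ) ≤ 2 * Kgrad * (‖x - y‖ + |s - t|) := by positivity
    have : (0:ℝ) ≤ δ * (2 * Kgrad * (‖x - y‖ + |s - t|)) := mul_nonneg hδ this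
    have := abs_nonneg (s - t)
    rw [hM_def]; linarith
  have hbound : ∀ z : Euc d, ‖F1 z - F2 z‖ ≤ bump d C z * M := by
    intro z
    have hdiff : F1 z - F2 z =
        bump d C z • (s • normalVec φ (x - s • z) - t • normalVec φ (y - t • z)) := by
      simp only [hF1, hF2]
      rw [smul_sub, smul_comm s, smul_comm t]
    by_cases hz : ‖z‖ < 1
    · set νa := normalVec φ (x - s • z)
      set νb := normalVec φ (y - t • z)
      have hinner : ‖s • νa - t • νb‖ ≤ M := by
        have hid : s • νa - t • νb = (s - t) • νa + t • (νa - νb) := by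
          rw [sub_smul, smul_sub]; abel
        have hab : ‖(x - s • z) - (y - t • z)‖ ≤ ‖x - y‖ + |s - t| := by
          have heq : (x - s • z) - (y - t • z) = (x - y) - (s - t) • z := by
            rw [sub_smul]; abel
          rw [heq]
          calc ‖(x - y) - (s - t) • z‖ ≤ ‖x - y‖ + ‖(s - t) • z‖ := norm_sub_le _ _
            _ = ‖x - y‖ + |s - t| * ‖z‖ := by rw [norm_smul, Real.norm_eq_abs]
            _ ≤ ‖x - y‖ + |s - t| * 1 :=
                add_le_add_right (mul_le_mul_of_nonneg_left hz.le (abs_nonneg _)) _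
            _ = ‖x - y‖ + |s - t| := by ring
        have hb1 : ‖(s - t) • νa‖ ≤ |s - t| := by
          rw [norm_smul, Real.norm_eq_abs]
          calc |s - t| * ‖νa‖ ≤ |s - t| * 1 :=
              mul_le_mul_of_nonneg_left (norm_normalVec_le φ _) (abs_nonneg _)
            _ = |s - t| := mul_one _
        have hb2 : ‖t • (νa - νb)‖ ≤ δ * (2 * Kgrad * (‖x - y‖ + |s - t|)) := by
          rw [norm_smul, Real.norm_eq_abs, abs_of_nonneg ht.1]
          have hv : ‖νa - νb‖ ≤ 2 * Kgrad * (‖x - y‖ + |s - t|) := by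
            calc ‖νa - νb‖ ≤ 2 * Kgrad * ‖(x - s • z) - (y - t • z)‖ :=
                normalVec_lip hLip _ _
              _ ≤ 2 * Kgrad * (‖x - y‖ + |s - t|) :=
                mul_le_mul_of_nonneg_left hab (by positivity)
          calc t * ‖νa - νb‖ ≤ δ * ‖νa - νb‖ :=
              mul_le_mul_of_nonneg_right ht.2 (norm_nonneg _)
            _ ≤ δ * (2 * Kgrad * (‖x - y‖ + |s - t|)) :=
              mul_le_mul_of_nonneg_left hv hδ
        calc ‖s • νa - t • νb‖ = ‖(s - t) • νa + t • (νa - νb)‖ := by rw [hid]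
          _ ≤ ‖(s - t) • νa‖ + ‖t • (νa - νb)‖ := norm_add_le _ _
          _ ≤ M := by rw [hM_def]; exact add_le_add hb1 hb2
      rw [hdiff, norm_smul, Real.norm_eq_abs, abs_of_nonneg (bump_nonneg hC z)]
      exact mul_le_mul_of_nonneg_left hinner (bump_nonneg hC z)
    · rw [hdiff, bump_eq_zero hz]
      simp
  calc ‖s • gAux C φ x s - t • gAux C φ y t‖
      = ‖∫ z, (F1 z - F2 z)‖ := by rw [h1, h2, MeasureTheory.integral_sub hi1 hi2]
    _ ≤ ∫ z, bump d C z * M :=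
        MeasureTheory.norm_integral_le_of_norm_le
          ((bump_integrable hC).mul_const M) (Filter.Eventually.of_forall hbound)
    _ = M := by rw [MeasureTheory.integral_mul_const, hnorm, one_mul]
    _ ≤ (1 + 2 * δ * (2 * Kgrad)) * max ‖x - y‖ |s - t| := by
        have hxm : ‖x - y‖ ≤ max ‖x - y‖ |s - t| := le_max_left _ _
        have hsm : |s - t| ≤ max ‖x - y‖ |s - t| := le_max_right _ _
        have hm0 : 0 ≤ max ‖x - y‖ |s - t| := le_trans (abs_nonneg _) hsm
        have hK : (0:ℝ) ≤ 2 * Kgrad := by positivity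
        have hint := mul_le_mul_of_nonneg_left (add_le_add hxm hsm) (mul_nonneg hδ hK)
        rw [hM_def]; nlinarith

lemma phi_lipOn {d : ℕ} {φ : Euc d → ℝ} (hφ : Differentiable ℝ φ) {Kgrad : ℝ≥0}
    (hLip : LipschitzWith Kgrad (gradient φ)) (hgrad0 : gradient φ 0 = 0)
    {δ : ℝ} (hδ : 0 < δ) :
    LipschitzOnWith (Kgrad * δ.toNNReal) φ (ball (0 : Euc d) δ) := by
  apply Convex.lipschitzOnWith_of_nnnorm_fderiv_le (fun x _ => hφ x) ?_ (convex_ball 0 δ)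
  intro x hx
  have hgn : ‖fderiv ℝ φ x‖₊ = ‖gradient φ x‖₊ := by
    have h : gradient φ x = (InnerProductSpace.toDual ℝ (Euc d)).symm (fderiv ℝ φ x) := rfl
    rw [h]
    exact ((InnerProductSpace.toDual ℝ (Euc d)).symm.nnnorm_map (fderiv ℝ φ x)).symm
  rw [hgn]
  calc ‖gradient φ x‖₊ = nndist (gradient φ x) (gradient φ 0) := by
        rw [hgrad0, nndist_eq_nnnorm, sub_zero]
    _ ≤ Kgrad * nndist x 0 := hLip.nndist_le x 0
    _ ≤ Kgrad * δ.toNNReal := by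
        apply mul_le_mul_right
        rw [nndist_zero_right, ← NNReal.coe_le_coe, coe_nnnorm,
          Real.coe_toNNReal δ hδ.le]
        exact (mem_ball_zero_iff.1 hx).le

lemma fmap_dist_le {d : ℕ} {C : ℝ} (hC : 0 ≤ C) {φ : Euc d → ℝ}
    (hφ : Differentiable ℝ φ) {Kgrad : ℝ≥0}
    (hLip : LipschitzWith Kgrad (gradient φ)) (hgrad0 : gradient φ 0 = 0)
    (hnorm : ∫ x : Euc d, bump d C x = 1) {δ : ℝ} (hδ : 0 < δ)
    {x y : Euc d} {s t : ℝ} (hx : x ∈ ball (0 : Euc d) δ) (hy : y ∈ ball (0 : Euc d) δ)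
    (hs : s ∈ Set.Ico 0 δ) (ht : t ∈ Set.Ico 0 δ) :
    dist (Fmap C φ (x, s)) (Fmap C φ (y, t)) ≤
      (max 1 (Kgrad * δ) + (1 + 2 * δ * (2 * Kgrad))) * max (dist x y) (dist s t) := by
  set m : ℝ := max (dist x y) (dist s t) with hm_def
  have hm0 : 0 ≤ m := le_trans dist_nonneg (le_max_left _ _)
  have hxm : ‖x - y‖ ≤ m := by rw [← dist_eq_norm]; exact le_max_left _ _
  have hsm : |s - t| ≤ m := by rw [← Real.dist_eq]; exact le_max_right _ _
  rw [Fmap_eq φ x hs.1, Fmap_eq φ y ht.1, dist_eq_norm]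
  have hrearr : (((x, φ x) : Euc d × ℝ) - s • gAux C φ x s) -
      (((y, φ y) : Euc d × ℝ) - t • gAux C φ y t) =
      (((x, φ x) : Euc d × ℝ) - ((y, φ y) : Euc d × ℝ)) -
      (s • gAux C φ x s - t • gAux C φ y t) := by abel
  rw [hrearr]
  have hbase : ‖(((x, φ x) : Euc d × ℝ) - ((y, φ y) : Euc d × ℝ))‖ ≤ max 1 (Kgrad * δ) * m := by
    have heq : (((x, φ x) : Euc d × ℝ) - ((y, φ y) : Euc d × ℝ)) = ((x - y, φ x - φ y) : Euc d × ℝ) := rfl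
    rw [heq, Prod.norm_def]
    apply max_le
    · calc ‖x - y‖ ≤ m := hxm
        _ = 1 * m := (one_mul m).symm
        _ ≤ max 1 (Kgrad * δ) * m := mul_le_mul_of_nonneg_right (le_max_left _ _) hm0
    · have hφl := (phi_lipOn hφ hLip hgrad0 hδ).dist_le_mul x hx y hy
      rw [Real.dist_eq] at hφl
      calc ‖φ x - φ y‖ = |φ x - φ y| := Real.norm_eq_abs _
        _ ≤ (Kgrad * δ.toNNReal : ℝ≥0) * dist x y := hφl
        _ = Kgrad * δ * dist x y := by
            push_cast [Real.coe_toNNReal δ hδ.le]; ring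
        _ ≤ (Kgrad * δ) * m := by
            apply mul_le_mul_of_nonneg_left (le_max_left _ _) (by positivity)
        _ ≤ max 1 (Kgrad * δ) * m := mul_le_mul_of_nonneg_right (le_max_right _ _) hm0
  have hpsi : ‖s • gAux C φ x s - t • gAux C φ y t‖ ≤ (1 + 2 * δ * (2 * Kgrad)) * m := by
    have h := psi_est hC hLip hnorm hδ.le x y
      (Set.mem_Icc.2 ⟨hs.1, hs.2.le⟩) (Set.mem_Icc.2 ⟨ht.1, ht.2.le⟩)
    calc ‖s • gAux C φ x s - t • gAux C φ y t‖
        ≤ (1 + 2 * δ * (2 * Kgrad)) * max ‖x - y‖ |s - t| := h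
      _ ≤ (1 + 2 * δ * (2 * Kgrad)) * m := by
          apply mul_le_mul_of_nonneg_left (max_le hxm hsm) (by positivity)
  calc ‖(((x, φ x) : Euc d × ℝ) - ((y, φ y) : Euc d × ℝ)) -
        (s • gAux C φ x s - t • gAux C φ y t)‖
      ≤ ‖(((x, φ x) : Euc d × ℝ) - ((y, φ y) : Euc d × ℝ))‖ +
        ‖s • gAux C φ x s - t • gAux C φ y t‖ := norm_sub_le _ _
    _ ≤ max 1 (Kgrad * δ) * m + (1 + 2 * δ * (2 * Kgrad)) * m := add_le_add hbase hpsi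
    _ = (max 1 (Kgrad * δ) + (1 + 2 * δ * (2 * Kgrad))) * m := by ring

end AuxLemmas

/-- In the reflection construction (with `φ(0) = 0`, `∇φ(0) = 0`, and
`δ > 0` small enough that `F̃` is a bijection from `𝓑_δ` onto its image `U` with Lipschitz
inverse, sending `{s > 0}` into `Ω` and `{s < 0}` into `Ωᶜ`), the map
`Φ(X) = F(R(F̃⁻¹(X)))` on `U⁻ = F̃(𝓑_δ ∩ {s < 0})` is Lipschitz with values in
`closure Ω`, extends continuously by the identity at the boundary points
`F̃(𝓑_δ ∩ {s = 0})`, and satisfies `ũ(X) = u(Φ(X))` on `U⁻`. -/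
theorem statement_15 (d : ℕ) (φ : Euc d → ℝ) (hφ : Differentiable ℝ φ)
    (Kgrad : ℝ≥0) (hLip : LipschitzWith Kgrad (gradient φ))
    (hφ0 : φ 0 = 0) (hgrad0 : gradient φ 0 = 0)
    (C : ℝ) (hC : 0 < C) (hnorm : ∫ x : Euc d, bump d C x = 1)
    (δ : ℝ) (hδ : 0 < δ)
    (hinj : InjOn (Ftil C φ) (paramBox d δ))
    (Kinv : ℝ≥0)
    (hinv : LipschitzOnWith Kinv (Function.invFunOn (Ftil C φ) (paramBox d δ))
      (Ftil C φ '' paramBox d δ))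
    (hplus : Ftil C φ '' (paramBox d δ ∩ {p | 0 < p.2}) ⊆ aboveGraph φ)
    (hminus : Ftil C φ '' (paramBox d δ ∩ {p | p.2 < 0}) ⊆ (aboveGraph φ)ᶜ)
    (u : Euc d × ℝ → ℝ) :
    (∃ c : ℝ≥0, LipschitzOnWith c (PhiMap C φ δ)
        (Ftil C φ '' (paramBox d δ ∩ {p | p.2 < 0}))) ∧
    (∀ X ∈ Ftil C φ '' (paramBox d δ ∩ {p | p.2 < 0}),
        PhiMap C φ δ X ∈ closure (aboveGraph φ)) ∧
    (∀ x₀ ∈ ball (0 : Euc d) δ,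
        Tendsto (PhiMap C φ δ)
          (𝓝[Ftil C φ '' (paramBox d δ ∩ {p | p.2 < 0})] (Ftil C φ (x₀, 0)))
          (𝓝 (Ftil C φ (x₀, 0)))) ∧
    (∀ X ∈ Ftil C φ '' (paramBox d δ ∩ {p | p.2 < 0}),
        uTil C φ δ u X = u (PhiMap C φ δ X)) := by
  classical
  have hleft := hinj.leftInvOn_invFunOn
  set KF : ℝ := max 1 (Kgrad * δ) + (1 + 2 * δ * (2 * Kgrad)) with hKF_def
  have hKF0 : (0:ℝ) ≤ KF := by
    have h1 : (1:ℝ) ≤ max 1 (Kgrad * δ) := le_max_left _ _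
    have h2 : (0:ℝ) ≤ 2 * δ * (2 * Kgrad) := by positivity
    rw [hKF_def]; linarith
  have hboxmem : ∀ p : Euc d × ℝ, p ∈ paramBox d δ →
      p.1 ∈ ball (0 : Euc d) δ ∧ p.2 ∈ Set.Ioo (-δ) δ := fun p hp => Set.mem_prod.1 hp
  have hmem : ∀ p ∈ paramBox d δ ∩ {p : Euc d × ℝ | p.2 < 0},
      p.1 ∈ ball (0 : Euc d) δ ∧ -p.2 ∈ Set.Ico 0 δ := by
    intro p hp
    obtain ⟨hp1, hp2⟩ := hboxmem p hp.1
    have hp3 : p.2 < 0 := hp.2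
    exact ⟨hp1, ⟨by linarith, by linarith [hp2.1]⟩⟩
  have hPhi_eq : ∀ p ∈ paramBox d δ ∩ {p : Euc d × ℝ | p.2 < 0},
      PhiMap C φ δ (Ftil C φ p) = Fmap C φ (p.1, -p.2) := by
    intro p hp
    unfold PhiMap Rrefl
    rw [hleft hp.1]
  have hFtil_pos : ∀ (x : Euc d) (s : ℝ), 0 ≤ s → Ftil C φ (x, s) = Fmap C φ (x, s) := by
    intro x s hs
    unfold Ftil
    rw [if_pos hs]
  have hdist_key : ∀ p ∈ paramBox d δ ∩ {p : Euc d × ℝ | p.2 < 0}, ∀ q : Euc d × ℝ,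
      q.1 ∈ ball (0:Euc d) δ → -q.2 ∈ Set.Ico 0 δ → q ∈ paramBox d δ →
      dist (Fmap C φ (p.1, -p.2)) (Fmap C φ (q.1, -q.2)) ≤
        KF * (Kinv * dist (Ftil C φ p) (Ftil C φ q)) := by
    intro p hp q hq1 hq2 hqB
    obtain ⟨hp1, hp2⟩ := hmem p hp
    calc dist (Fmap C φ (p.1, -p.2)) (Fmap C φ (q.1, -q.2))
        ≤ KF * max (dist p.1 q.1) (dist (-p.2) (-q.2)) :=
          fmap_dist_le hC.le hφ hLip hgrad0 hnorm hδ hp1 hq1 hp2 hq2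
      _ = KF * dist p q := by rw [dist_neg_neg, ← Prod.dist_eq]
      _ = KF * dist (Function.invFunOn (Ftil C φ) (paramBox d δ) (Ftil C φ p))
            (Function.invFunOn (Ftil C φ) (paramBox d δ) (Ftil C φ q)) := by
          rw [hleft hp.1, hleft hqB]
      _ ≤ KF * (Kinv * dist (Ftil C φ p) (Ftil C φ q)) := by
          refine mul_le_mul_of_nonneg_left ?_ hKF0
          exact hinv.dist_le_mul _ (Set.mem_image_of_mem _ hp.1) _
            (Set.mem_image_of_mem _ hqB)
  refine ⟨⟨(KF * Kinv).toNNReal, ?_⟩, ?_, ?_, ?_⟩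
  · -- Lipschitz
    apply LipschitzOnWith.of_dist_le_mul
    rintro X ⟨p, hp, rfl⟩ Y ⟨q, hq, rfl⟩
    rw [hPhi_eq p hp, hPhi_eq q hq,
      Real.coe_toNNReal _ (mul_nonneg hKF0 Kinv.coe_nonneg), mul_assoc]
    exact hdist_key p hp q (hmem q hq).1 (hmem q hq).2 hq.1
  · -- values in closure Ω
    rintro X ⟨p, hp, rfl⟩
    have hpneg : p.2 < 0 := hp.2
    obtain ⟨hp1, hp2⟩ := hboxmem p hp.1
    rw [hPhi_eq p hp]
    apply subset_closure
    apply hplus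
    refine ⟨(p.1, -p.2), ⟨Set.mem_prod.2 ⟨hp1, ⟨by show -δ < -p.2; linarith, by show -p.2 < δ; linarith [hp2.1]⟩⟩, ?_⟩, ?_⟩
    · show (0:ℝ) < -p.2
      linarith
    · exact hFtil_pos p.1 (-p.2) (by linarith)
  · -- continuous extension by the identity
    intro x₀ hx₀
    have hqB : ((x₀, (0:ℝ)) : Euc d × ℝ) ∈ paramBox d δ :=
      Set.mem_prod.2 ⟨hx₀, ⟨by show -δ < (0:ℝ); linarith, by show (0:ℝ) < δ; exact hδ⟩⟩
    have hbnd : ∀ X ∈ Ftil C φ '' (paramBox d δ ∩ {p : Euc d × ℝ | p.2 < 0}),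
        dist (PhiMap C φ δ X) (Ftil C φ (x₀, 0)) ≤
          KF * (Kinv * dist X (Ftil C φ (x₀, 0))) := by
      rintro X ⟨p, hp, rfl⟩
      rw [hPhi_eq p hp]
      have h := hdist_key p hp (x₀, 0) hx₀
        (by simp only [neg_zero]; exact ⟨le_rfl, hδ⟩) hqB
      have hF0 : Ftil C φ (x₀, 0) = Fmap C φ (x₀, 0) := hFtil_pos x₀ 0 le_rfl
      simp only [neg_zero, hF0] at h ⊢
      exact h
    rw [Metric.tendsto_nhdsWithin_nhds]
    intro ε hε
    have hK0 : (0:ℝ) ≤ KF * Kinv := mul_nonneg hKF0 Kinv.coe_nonneg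
    refine ⟨ε / (KF * Kinv + 1), div_pos hε (by linarith), ?_⟩
    intro X hX hdX
    calc dist (PhiMap C φ δ X) (Ftil C φ (x₀, 0))
        ≤ KF * Kinv * dist X (Ftil C φ (x₀, 0)) := by
          rw [mul_assoc]; exact hbnd X hX
      _ ≤ KF * Kinv * (ε / (KF * Kinv + 1)) := by
          exact mul_le_mul_of_nonneg_left hdX.le hK0
      _ = KF * Kinv * ε / (KF * Kinv + 1) := by ring
      _ < ε := by
          rw [div_lt_iff₀ (by linarith)]
          nlinarith
  · -- compatibility with the reflected function
    rintro X ⟨p, hp, rfl⟩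
    have hpneg : p.2 < 0 := hp.2
    unfold uTil
    rw [hleft hp.1]
    unfold vTil
    rw [if_neg (not_le.2 hpneg), hPhi_eq p hp]
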